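/- conv(P₀ ∪ P₁ ∪ P₂) equals the convex hull of the eight points (0,0,0,θ̲,0), (0,0,0,θ̄,0), (1,1,0,0,0), (1,1,0,θ̄,θ̄·δB̲), (1,1,0,θ̄,θ̄·δB̄), (1,0,1,0,0), (1,0,1,θ̲,θ̲·δB̲), (1,0,1,θ̲,θ̲·δB̄). -/
import Mathlib
set_option maxHeartbeats 1000000

abbrev Pt := ℝ × ℝ × ℝ × ℝ × ℝ

def P0 (tl tu : ℝ) : Set Pt :=
  {p | p.1 = 0 ∧ p.2.1 = 0 ∧ p.2.2.1 = 0 ∧ p.2.2.2.2 = 0 ∧ tl ≤ p.2.2.2.1 ∧ p.2.2.2.1 ≤ tu}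

def P1 (tu bl bu : ℝ) : Set Pt :=
  {p | p.1 = 1 ∧ p.2.1 = 1 ∧ p.2.2.1 = 0 ∧ 0 ≤ p.2.2.2.1 ∧ p.2.2.2.1 ≤ tu ∧
    bl * p.2.2.2.1 ≤ p.2.2.2.2 ∧ p.2.2.2.2 ≤ bu * p.2.2.2.1}

def P2 (tl bl bu : ℝ) : Set Pt :=
  {p | p.1 = 1 ∧ p.2.1 = 0 ∧ p.2.2.1 = 1 ∧ tl ≤ p.2.2.2.1 ∧ p.2.2.2.1 ≤ 0 ∧
    bu * p.2.2.2.1 ≤ p.2.2.2.2 ∧ p.2.2.2.2 ≤ bl * p.2.2.2.1}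

lemma mem3 {s : Set Pt} (hs : Convex ℝ s) {x y z : Pt} (hx : x ∈ s) (hy : y ∈ s) (hz : z ∈ s)
    {a b c : ℝ} (ha : 0 ≤ a) (hb : 0 ≤ b) (hc : 0 ≤ c) (habc : a + b + c = 1) :
    a • x + b • y + c • z ∈ s := by
  have := hs.sum_mem (t := Finset.univ) (w := ![a, b, c]) (z := ![x, y, z])
    (by intro i _; fin_cases i <;> simpa) (by simp [Fin.sum_univ_three]; linarith)
    (by intro i _; fin_cases i <;> simpa)
  simpa [Fin.sum_univ_three, add_assoc] using this

theorem stmt_14 (tl tu bl bu : ℝ) (h1 : tl < 0) (h2 : 0 < tu) (h3 : bl < 0) (h4 : 0 < bu) :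
    convexHull ℝ (P0 tl tu ∪ P1 tu bl bu ∪ P2 tl bl bu) = convexHull ℝ
      ({((0:ℝ),(0:ℝ),(0:ℝ),tl,(0:ℝ)), ((0:ℝ),(0:ℝ),(0:ℝ),tu,(0:ℝ)),
        ((1:ℝ),(1:ℝ),(0:ℝ),(0:ℝ),(0:ℝ)), ((1:ℝ),(1:ℝ),(0:ℝ),tu,tu*bl),
        ((1:ℝ),(1:ℝ),(0:ℝ),tu,tu*bu),
        ((1:ℝ),(0:ℝ),(1:ℝ),(0:ℝ),(0:ℝ)), ((1:ℝ),(0:ℝ),(1:ℝ),tl,tl*bl),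
        ((1:ℝ),(0:ℝ),(1:ℝ),tl,tl*bu)} : Set Pt) := by
  set S : Set Pt := ({((0:ℝ),(0:ℝ),(0:ℝ),tl,(0:ℝ)), ((0:ℝ),(0:ℝ),(0:ℝ),tu,(0:ℝ)),
        ((1:ℝ),(1:ℝ),(0:ℝ),(0:ℝ),(0:ℝ)), ((1:ℝ),(1:ℝ),(0:ℝ),tu,tu*bl),
        ((1:ℝ),(1:ℝ),(0:ℝ),tu,tu*bu),
        ((1:ℝ),(0:ℝ),(1:ℝ),(0:ℝ),(0:ℝ)), ((1:ℝ),(0:ℝ),(1:ℝ),tl,tl*bl),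
        ((1:ℝ),(0:ℝ),(1:ℝ),tl,tl*bu)} : Set Pt) with hS
  have hbb : bl < bu := h3.trans h4
  have htne : tu - tl ≠ 0 := ne_of_gt (by linarith)
  have htune : tu ≠ 0 := ne_of_gt h2
  have htlne : tl ≠ 0 := ne_of_lt h1
  have hbne : bu - bl ≠ 0 := ne_of_gt (by linarith)
  have hconv : Convex ℝ (convexHull ℝ S) := convex_convexHull ℝ S
  have hmem : ∀ q ∈ S, q ∈ convexHull ℝ S := fun q hq => subset_convexHull ℝ S hq
  apply Set.Subset.antisymm
  · apply convexHull_min _ hconv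
    rintro ⟨ψ, z1, z2, θ, δ⟩ ((⟨e1, e2, e3, e4, e5, e6⟩ | ⟨e1, e2, e3, e4, e5, e6, e7⟩) |
      ⟨e1, e2, e3, e4, e5, e6, e7⟩)
    · -- P0
      simp only at e1 e2 e3 e4 e5 e6
      subst e1 e2 e3 e4
      have heq : (((0:ℝ),(0:ℝ),(0:ℝ),θ,(0:ℝ)) : Pt) =
          ((tu - θ)/(tu - tl)) • ((0:ℝ),(0:ℝ),(0:ℝ),tl,(0:ℝ)) +
          ((θ - tl)/(tu - tl)) • ((0:ℝ),(0:ℝ),(0:ℝ),tu,(0:ℝ)) +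
          (0:ℝ) • ((0:ℝ),(0:ℝ),(0:ℝ),tu,(0:ℝ)) := by
        simp only [Prod.smul_mk, Prod.mk_add_mk, smul_eq_mul, Prod.mk.injEq]
        refine ⟨?_, ?_, ?_, ?_, ?_⟩ <;> (try field_simp) <;> (try ring) <;> (try norm_num)
      rw [heq]
      exact mem3 hconv (hmem _ (by simp [hS])) (hmem _ (by simp [hS])) (hmem _ (by simp [hS]))
        (div_nonneg (by linarith) (by linarith)) (div_nonneg (by linarith) (by linarith))
        le_rfl (by field_simp; try ring)
    · -- P1
      simp only at e1 e2 e3 e4 e5 e6 e7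
      subst e1 e2 e3
      have hd : (0:ℝ) < tu * (bu - bl) := mul_pos h2 (by linarith)
      have hdne : tu * (bu - bl) ≠ 0 := ne_of_gt hd
      have heq : (((1:ℝ),(1:ℝ),(0:ℝ),θ,δ) : Pt) =
          (1 - θ/tu) • ((1:ℝ),(1:ℝ),(0:ℝ),(0:ℝ),(0:ℝ)) +
          ((bu*θ - δ)/(tu*(bu-bl))) • ((1:ℝ),(1:ℝ),(0:ℝ),tu,tu*bl) +
          ((δ - bl*θ)/(tu*(bu-bl))) • ((1:ℝ),(1:ℝ),(0:ℝ),tu,tu*bu) := by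
        simp only [Prod.smul_mk, Prod.mk_add_mk, smul_eq_mul, Prod.mk.injEq]
        refine ⟨?_, ?_, ?_, ?_, ?_⟩ <;> (try field_simp) <;> (try ring) <;> (try norm_num)
      rw [heq]
      exact mem3 hconv (hmem _ (by simp [hS])) (hmem _ (by simp [hS])) (hmem _ (by simp [hS]))
        (by rw [sub_nonneg]; exact div_le_one_of_le₀ e5 h2.le)
        (div_nonneg (by linarith) hd.le) (div_nonneg (by linarith) hd.le)
        (by field_simp; try ring)
    · -- P2
      simp only at e1 e2 e3 e4 e5 e6 e7
      subst e1 e2 e3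
      have hd : tl * (bu - bl) < 0 := mul_neg_of_neg_of_pos h1 (by linarith)
      have hdne : tl * (bu - bl) ≠ 0 := ne_of_lt hd
      have heq : (((1:ℝ),(0:ℝ),(1:ℝ),θ,δ) : Pt) =
          (1 - θ/tl) • ((1:ℝ),(0:ℝ),(1:ℝ),(0:ℝ),(0:ℝ)) +
          ((bu*θ - δ)/(tl*(bu-bl))) • ((1:ℝ),(0:ℝ),(1:ℝ),tl,tl*bl) +
          ((δ - bl*θ)/(tl*(bu-bl))) • ((1:ℝ),(0:ℝ),(1:ℝ),tl,tl*bu) := by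
        simp only [Prod.smul_mk, Prod.mk_add_mk, smul_eq_mul, Prod.mk.injEq]
        refine ⟨?_, ?_, ?_, ?_, ?_⟩ <;> (try field_simp) <;> (try ring) <;> (try norm_num)
      rw [heq]
      refine mem3 hconv (hmem _ (by simp [hS])) (hmem _ (by simp [hS])) (hmem _ (by simp [hS]))
        ?_ ?_ ?_ (by field_simp; try ring)
      · have : θ / tl ≤ 1 := by
          rw [div_le_one_iff]
          right; right; exact ⟨h1, e4⟩
        linarith
      · exact div_nonneg_iff.mpr (Or.inr ⟨by linarith, hd.le⟩)
      · exact div_nonneg_iff.mpr (Or.inr ⟨by linarith, hd.le⟩)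
  · apply convexHull_mono
    rintro q hq
    simp only [hS, Set.mem_insert_iff, Set.mem_singleton_iff] at hq
    rcases hq with h | h | h | h | h | h | h | h <;> subst h
    · refine Or.inl (Or.inl ?_)
      simp only [P0, Set.mem_setOf_eq]
      norm_num
      all_goals and_intros
      all_goals linarith
    · refine Or.inl (Or.inl ?_)
      simp only [P0, Set.mem_setOf_eq]
      norm_num
      all_goals and_intros
      all_goals linarith
    · refine Or.inl (Or.inr ?_)
      simp only [P1, Set.mem_setOf_eq]
      norm_num
      all_goals and_intros
      all_goals nlinarith
    · refine Or.inl (Or.inr ?_)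
      simp only [P1, Set.mem_setOf_eq]
      norm_num
      all_goals and_intros
      all_goals nlinarith
    · refine Or.inl (Or.inr ?_)
      simp only [P1, Set.mem_setOf_eq]
      norm_num
      all_goals and_intros
      all_goals nlinarith
    · refine Or.inr ?_
      simp only [P2, Set.mem_setOf_eq]
      norm_num
      all_goals and_intros
      all_goals nlinarith
    · refine Or.inr ?_
      simp only [P2, Set.mem_setOf_eq]
      norm_num
      all_goals and_intros
      all_goals nlinarith
    · refine Or.inr ?_
      simp only [P2, Set.mem_setOf_eq]
      norm_num
      all_goals and_intros
      all_goals nlinarith
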